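/- Suppose Ω ⊂ E_k is a domain convex with respect to the set of directions M_u := {ζ ∈ E_k : f_u(ζ) = 0}, f_u(E_k) = ℂ, and Φ : Ω → A_n^m is monogenic in Ω. If ζ_1, ζ_2 ∈ Ω with ζ_2 − ζ_1 ∈ M_u, then Φ(ζ_2) − Φ(ζ_1) lies in the maximal ideal 𝔍_u = span{I_r : r ≠ u}. -/

import Mathlib

open Filter Topology

lemma coord_mul_basis {n m : ℕ}
    (A : Type*) [NormedCommRing A] [NormedAlgebra ℂ A]
    (I : Module.Basis (Fin n) ℂ A)
    (h1 : ∀ r s : Fin n, (r : ℕ) < m → (s : ℕ) < m →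
      I r * I s = if r = s then I r else 0)
    (h2 : ∀ r s : Fin n, m ≤ (r : ℕ) → m ≤ (s : ℕ) →
      I r * I s ∈ Submodule.span ℂ {x : A | ∃ p : Fin n, max r s < p ∧ x = I p})
    (uu : Fin n → Fin n)
    (h3 : ∀ s : Fin n, m ≤ (s : ℕ) → (uu s : ℕ) < m ∧ I (uu s) * I s = I s ∧
      ∀ r : Fin n, (r : ℕ) < m → r ≠ uu s → I r * I s = 0)
    (u : Fin n) (hu : (u : ℕ) < m) (r s : Fin n) :
    I.coord u (I r * I s) = (if r = u then 1 else 0) * (if s = u then 1 else 0) := by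
  have hc : ∀ p : Fin n, I.coord u (I p) = if p = u then 1 else 0 := by
    intro p
    simp [Module.Basis.coord_apply, Finsupp.single_apply]
  rcases lt_or_ge (r : ℕ) m with hr | hr
  · rcases lt_or_ge (s : ℕ) m with hs | hs
    · rw [h1 r s hr hs]
      by_cases hrs : r = s
      · subst hrs
        rw [if_pos rfl, hc]
        split_ifs <;> simp
      · rw [if_neg hrs, map_zero]
        rcases eq_or_ne r u with h | h <;> rcases eq_or_ne s u with h' | h' <;>
          simp_all
    · -- r < m ≤ s
      have hsu : s ≠ u := fun h => absurd (h ▸ hs) (not_le.mpr hu)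
      by_cases hr3 : r = uu s
      · rw [hr3, (h3 s hs).2.1, hc s, if_neg hsu]
        simp [hsu]
      · rw [(h3 s hs).2.2 r hr hr3]
        simp [hsu]
  · rcases lt_or_ge (s : ℕ) m with hs | hs
    · have hru : r ≠ u := fun h => absurd (h ▸ hr) (not_le.mpr hu)
      rw [mul_comm]
      by_cases hs3 : s = uu r
      · rw [hs3, (h3 r hr).2.1, hc r, if_neg hru]
        simp [hru]
      · rw [(h3 r hr).2.2 s hs hs3]
        simp [hru]
    · have hru : r ≠ u := fun h => absurd (h ▸ hr) (not_le.mpr hu)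
      have hz : I.coord u (I r * I s) = 0 := by
        have hle : Submodule.span ℂ {x : A | ∃ p : Fin n, max r s < p ∧ x = I p} ≤
            LinearMap.ker (I.coord u) := by
          rw [Submodule.span_le]
          rintro x ⟨p, hp, rfl⟩
          have hpu : p ≠ u := by
            intro h
            have h5 : (r : ℕ) < (p : ℕ) := lt_of_le_of_lt (le_max_left _ _) hp
            rw [h] at h5
            exact absurd h5 (not_lt.mpr (le_of_lt (lt_of_lt_of_le hu hr)))
          simp [SetLike.mem_coe, LinearMap.mem_ker, hc, hpu]
        exact hle (h2 r s hr hs)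
      rw [hz]
      simp [hru]

lemma coord_mul {n m : ℕ}
    (A : Type*) [NormedCommRing A] [NormedAlgebra ℂ A]
    (I : Module.Basis (Fin n) ℂ A)
    (h1 : ∀ r s : Fin n, (r : ℕ) < m → (s : ℕ) < m →
      I r * I s = if r = s then I r else 0)
    (h2 : ∀ r s : Fin n, m ≤ (r : ℕ) → m ≤ (s : ℕ) →
      I r * I s ∈ Submodule.span ℂ {x : A | ∃ p : Fin n, max r s < p ∧ x = I p})
    (uu : Fin n → Fin n)
    (h3 : ∀ s : Fin n, m ≤ (s : ℕ) → (uu s : ℕ) < m ∧ I (uu s) * I s = I s ∧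
      ∀ r : Fin n, (r : ℕ) < m → r ≠ uu s → I r * I s = 0)
    (u : Fin n) (hu : (u : ℕ) < m) (a b : A) :
    I.coord u (a * b) = I.coord u a * I.coord u b := by
  conv_lhs => rw [← Module.Basis.sum_repr I a, ← Module.Basis.sum_repr I b]
  rw [Finset.sum_mul_sum]
  simp only [smul_mul_smul_comm, map_sum, map_smul]
  rw [Finset.sum_congr rfl (fun r _ => Finset.sum_congr rfl
    (fun s _ => by rw [coord_mul_basis A I h1 h2 uu h3 u hu r s]))]
  simp [smul_eq_mul, mul_ite, Finset.sum_ite_eq', Module.Basis.coord_apply]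

lemma mem_span_of_coord_eq_zero {n : ℕ}
    (A : Type*) [NormedCommRing A] [NormedAlgebra ℂ A]
    (I : Module.Basis (Fin n) ℂ A) (u : Fin n) (x : A) (hx : I.coord u x = 0) :
    x ∈ Submodule.span ℂ {y : A | ∃ r : Fin n, r ≠ u ∧ y = I r} := by
  have hrepr : x = ∑ r, I.repr x r • I r := (Module.Basis.sum_repr I x).symm
  rw [hrepr]
  apply Submodule.sum_mem
  intro r _
  by_cases hr : r = u
  · subst hr
    have h0 : I.repr x r = 0 := hx
    rw [h0, zero_smul]
    exact Submodule.zero_mem _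
  · exact Submodule.smul_mem _ _ (Submodule.subset_span ⟨r, hr, rfl⟩)


/-- Lemma 2: if `Ω ⊂ E_k` is a domain convex with respect to the
set of directions `M_u = {ζ ∈ E_k : f_u(ζ) = 0}`, `f_u(E_k) = ℂ`, and `Φ` is
monogenic in `Ω`, then `ζ_2 - ζ_1 ∈ M_u` implies
`Φ(ζ_2) - Φ(ζ_1) ∈ 𝔍_u = span{I r : r ≠ u}`. -/
theorem monogenic_difference_in_ideal {n m k : ℕ} [NeZero k]
    (A : Type*) [NormedCommRing A] [NormedAlgebra ℂ A]
    (I : Module.Basis (Fin n) ℂ A)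
    (h1 : ∀ r s : Fin n, (r : ℕ) < m → (s : ℕ) < m →
      I r * I s = if r = s then I r else 0)
    (h2 : ∀ r s : Fin n, m ≤ (r : ℕ) → m ≤ (s : ℕ) →
      I r * I s ∈ Submodule.span ℂ {x : A | ∃ p : Fin n, max r s < p ∧ x = I p})
    (uu : Fin n → Fin n)
    (h3 : ∀ s : Fin n, m ≤ (s : ℕ) → (uu s : ℕ) < m ∧ I (uu s) * I s = I s ∧
      ∀ r : Fin n, (r : ℕ) < m → r ≠ uu s → I r * I s = 0)
    (hone : (1 : A) = ∑ r ∈ Finset.univ.filter (fun r : Fin n => (r : ℕ) < m), I r)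
    (e : Fin k → A) (he0 : e 0 = 1)
    (hli : ∀ x : Fin k → ℝ, ∑ j, (x j : ℂ) • e j = 0 → x = 0)
    (u : Fin n) (hu : (u : ℕ) < m)
    (hsurj : (I.coord u) '' {h : A | ∃ x : Fin k → ℝ, h = ∑ j, (x j : ℂ) • e j} = Set.univ)
    (Ωℝ : Set (Fin k → ℝ)) (hΩo : IsOpen Ωℝ) (hΩc : IsConnected Ωℝ)
    (hconv : ∀ ζ₁ ∈ (fun x : Fin k → ℝ => ∑ j, (x j : ℂ) • e j) '' Ωℝ,
      ∀ ζ₂ ∈ (fun x : Fin k → ℝ => ∑ j, (x j : ℂ) • e j) '' Ωℝ,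
        I.coord u (ζ₂ - ζ₁) = 0 → ∀ α ∈ Set.Icc (0 : ℝ) 1,
          ζ₁ + (α : ℂ) • (ζ₂ - ζ₁) ∈
            (fun x : Fin k → ℝ => ∑ j, (x j : ℂ) • e j) '' Ωℝ)
    (Φ : A → A)
    (hΦcont : ContinuousOn Φ ((fun x : Fin k → ℝ => ∑ j, (x j : ℂ) • e j) '' Ωℝ))
    (hΦmono : ∀ ζ ∈ (fun x : Fin k → ℝ => ∑ j, (x j : ℂ) • e j) '' Ωℝ,
      ∃ d : A, ∀ h ∈ {h : A | ∃ x : Fin k → ℝ, h = ∑ j, (x j : ℂ) • e j},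
        Tendsto (fun ε : ℝ => ((ε : ℂ))⁻¹ • (Φ (ζ + (ε : ℂ) • h) - Φ ζ))
          (𝓝[>] (0 : ℝ)) (𝓝 (h * d)))
    (ζ₁ ζ₂ : A)
    (hζ₁ : ζ₁ ∈ (fun x : Fin k → ℝ => ∑ j, (x j : ℂ) • e j) '' Ωℝ)
    (hζ₂ : ζ₂ ∈ (fun x : Fin k → ℝ => ∑ j, (x j : ℂ) • e j) '' Ωℝ)
    (hdiff : (∃ x : Fin k → ℝ, ζ₂ - ζ₁ = ∑ j, (x j : ℂ) • e j) ∧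
      I.coord u (ζ₂ - ζ₁) = 0) :
    Φ ζ₂ - Φ ζ₁ ∈ Submodule.span ℂ {x : A | ∃ r : Fin n, r ≠ u ∧ x = I r} := by
  classical
  have hfd : FiniteDimensional ℂ A := Module.Finite.of_basis I
  have hcoordc : Continuous (I.coord u) := LinearMap.continuous_of_finiteDimensional _
  have hmul : ∀ a b : A, I.coord u (a * b) = I.coord u a * I.coord u b :=
    coord_mul A I h1 h2 uu h3 u hu
  set γ : ℝ → A := fun α => ζ₁ + (α : ℂ) • (ζ₂ - ζ₁) with hγ
  have hmem : ∀ α ∈ Set.Icc (0:ℝ) 1,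
      γ α ∈ (fun x : Fin k → ℝ => ∑ j, (x j : ℂ) • e j) '' Ωℝ :=
    fun α hα => hconv ζ₁ hζ₁ ζ₂ hζ₂ hdiff.2 α hα
  set g : ℝ → ℂ := fun α => I.coord u (Φ (γ α)) with hg
  have hγc : Continuous γ := by
    apply continuous_const.add
    exact (Complex.continuous_ofReal.smul continuous_const)
  have hgcont : ContinuousOn g (Set.Icc 0 1) := by
    apply hcoordc.comp_continuousOn
    exact hΦcont.comp hγc.continuousOn hmem
  have hderiv : ∀ α ∈ Set.Ico (0:ℝ) 1, HasDerivWithinAt g 0 (Set.Ici α) α := by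
    intro α hα
    obtain ⟨d, hd⟩ := hΦmono (γ α) (hmem α (Set.Ico_subset_Icc_self hα))
    have hd' := hd (ζ₂ - ζ₁) hdiff.1
    have h0 : I.coord u ((ζ₂ - ζ₁) * d) = 0 := by
      rw [hmul, hdiff.2, zero_mul]
    have htend : Tendsto
        (fun ε : ℝ => I.coord u (((ε : ℂ))⁻¹ • (Φ (γ α + (ε : ℂ) • (ζ₂ - ζ₁)) - Φ (γ α))))
        (𝓝[>] (0:ℝ)) (𝓝 0) := by
      rw [← h0]
      exact (hcoordc.tendsto _).comp hd'
    rw [hasDerivWithinAt_iff_tendsto_slope]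
    rw [Set.Ici_sdiff_left]
    have hsub : Tendsto (fun t : ℝ => t - α) (𝓝[Set.Ioi α] α) (𝓝[>] (0:ℝ)) := by
      apply tendsto_nhdsWithin_of_tendsto_nhds_of_eventually_within
      · have : Tendsto (fun t : ℝ => t - α) (𝓝 α) (𝓝 (α - α)) :=
          (continuous_id.sub continuous_const).tendsto α
        simpa using this.mono_left nhdsWithin_le_nhds
      · filter_upwards [self_mem_nhdsWithin] with t ht
        simpa [Set.mem_Ioi, sub_pos] using ht
    have heq : ∀ t : ℝ,
        I.coord u ((((t - α : ℝ) : ℂ))⁻¹ •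
            (Φ (γ α + ((t - α : ℝ) : ℂ) • (ζ₂ - ζ₁)) - Φ (γ α)))
          = slope g α t := by
      intro t
      have hγt : γ t = γ α + ((t - α : ℝ) : ℂ) • (ζ₂ - ζ₁) := by
        simp only [hγ, Complex.ofReal_sub, sub_smul]
        abel
      rw [slope_def_module, hg]
      simp only [← hγt, map_smul, map_sub]
      rw [Complex.real_smul, Complex.ofReal_inv]
      rw [smul_eq_mul, Complex.ofReal_sub]
    have hT : Tendsto (fun t : ℝ => I.coord u ((((t - α : ℝ) : ℂ))⁻¹ •
        (Φ (γ α + ((t - α : ℝ) : ℂ) • (ζ₂ - ζ₁)) - Φ (γ α))))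
        (𝓝[>] α) (𝓝 0) := htend.comp hsub
    exact Filter.Tendsto.congr heq hT
  have hkey := norm_image_sub_le_of_norm_deriv_right_le_segment hgcont hderiv
    (C := 0) (fun x _ => by simp) 1 (by constructor <;> norm_num)
  have hg10 : g 1 = g 0 := by
    have : ‖g 1 - g 0‖ ≤ 0 := by simpa using hkey
    have := le_antisymm this (norm_nonneg _)
    rwa [norm_eq_zero, sub_eq_zero] at this
  have hγ1 : γ 1 = ζ₂ := by simp [hγ]
  have hγ0 : γ 0 = ζ₁ := by simp [hγ]
  apply mem_span_of_coord_eq_zero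
  rw [map_sub]
  have h2' : I.coord u (Φ ζ₂) = g 1 := by simp only [hg, hγ1]
  have h1' : I.coord u (Φ ζ₁) = g 0 := by simp only [hg, hγ0]
  rw [h2', h1', hg10, sub_self]
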